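/- Let G ∈ G* be a 2-connected graph, and let C be a longest odd cycle of G with |C| ≥ 5. For a vertex v outside C, let T(v) denote the set of vertices w ∈ C such that some v,w-path meets C only at w. Then T(v) is a clique in G. -/

import Mathlib

open SimpleGraph

/-- Adjacency in the line graph `L(G)`: two distinct edges sharing an endpoint. -/
def lineAdj {V : Type*} (G : SimpleGraph V) (e f : G.edgeSet) : Prop :=
  e ≠ f ∧ ∃ x : V, x ∈ (e : Sym2 V) ∧ x ∈ (f : Sym2 V)

/-- `D` is an orientation of the (loopless) adjacency relation `Adj`:
every arc of `D` is an edge, and every edge gets at least one of its two arcs. -/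
def IsOrientation {α : Type*} (Adj : α → α → Prop) (D : α → α → Prop) : Prop :=
  (∀ a b, D a b → Adj a b) ∧ (∀ a b, Adj a b → D a b ∨ D b a)

/-- A digraph (relation) is kernel-perfect if every induced subdigraph has a kernel:
an independent set `S` such that every vertex outside `S` has an out-neighbor in `S`. -/
def KernelPerfect {α : Type*} (D : α → α → Prop) : Prop :=
  ∀ Z : Set α, ∃ S ⊆ Z, (∀ a ∈ S, ∀ b ∈ S, ¬ D a b) ∧
    ∀ z ∈ Z, z ∉ S → ∃ s ∈ S, D z s

/-- Out-degree of a vertex in a digraph given as a relation. -/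
noncomputable def outDeg {α : Type*} (D : α → α → Prop) (a : α) : ℕ := {b | D a b}.ncard

/-- Degree of a vertex. -/
noncomputable def deg {V : Type*} (G : SimpleGraph V) (v : V) : ℕ := (G.neighborSet v).ncard

/-- Maximum degree. -/
noncomputable def maxDeg {V : Type*} (G : SimpleGraph V) : ℕ := sSup (Set.range (deg G))

/-- `G` is `f`-edge-orientable: `L(G)` admits a kernel-perfect orientation with
`1 + d⁺(e) ≤ f e` for every edge `e`. -/
def EdgeOrientable {V : Type*} (G : SimpleGraph V) (f : G.edgeSet → ℕ) : Prop :=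
  ∃ D : G.edgeSet → G.edgeSet → Prop,
    IsOrientation (lineAdj G) D ∧ KernelPerfect D ∧ ∀ e, outDeg D e + 1 ≤ f e

open Classical in
/-- The function `f_{k,v}`: `deg v` on edges incident to `v`, and `k` elsewhere. -/
noncomputable def fkv {V : Type*} (G : SimpleGraph V) (k : ℕ) (v : V) (e : G.edgeSet) : ℕ :=
  if v ∈ (e : Sym2 V) then deg G v else k

/-- `G` is strongly `k`-edge-orientable. -/
def StronglyEdgeOrientable {V : Type*} (G : SimpleGraph V) (k : ℕ) : Prop :=
  ∀ v : V, EdgeOrientable G (fkv G k v)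

/-- `G` is `f`-edge-choosable. -/
def FEdgeChoosable {V : Type*} (G : SimpleGraph V) (f : G.edgeSet → ℕ) : Prop :=
  ∀ ℓ : G.edgeSet → Finset ℕ, (∀ e, f e ≤ (ℓ e).card) →
    ∃ φ : G.edgeSet → ℕ, (∀ e, φ e ∈ ℓ e) ∧
      ∀ e₁ e₂, lineAdj G e₁ e₂ → φ e₁ ≠ φ e₂

/-- `G ∈ G*`: any two distinct odd cycles share at most one edge. -/
def InGStar {V : Type*} (G : SimpleGraph V) : Prop :=
  ∀ (u w : V) (c₁ : G.Walk u u) (c₂ : G.Walk w w),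
    c₁.IsCycle → c₂.IsCycle → Odd c₁.length → Odd c₂.length →
    {e | e ∈ c₁.edges} ≠ {e | e ∈ c₂.edges} →
    ({e | e ∈ c₁.edges} ∩ {e | e ∈ c₂.edges}).ncard ≤ 1

/-- `G` is 2-connected: connected, and still connected after deleting any one vertex. -/
def TwoConn {V : Type*} (G : SimpleGraph V) : Prop :=
  G.Connected ∧ ∀ v : V, (G.induce {w | w ≠ v}).Connected

/-- A block of `G`: a maximal 2-connected subgraph. -/
def IsBlock {V : Type*} (G : SimpleGraph V) (B : G.Subgraph) : Prop :=
  TwoConn B.coe ∧ ∀ B' : G.Subgraph, TwoConn B'.coe → B ≤ B' → B = B'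

/-- Vertex type of the theta graph with path lengths `l`: two hubs
(`Sum.inl false`, `Sum.inl true`) plus the internal vertices of each path. -/
def ThetaVert (l : List ℕ) : Type := Bool ⊕ (Σ i : Fin l.length, Fin (l.get i - 1))

/-- The theta graph `Θ_{l₁,…,l_k}`: two hubs joined by internally disjoint paths,
the `i`-th of length `l i`. -/
def thetaGraph (l : List ℕ) : SimpleGraph (ThetaVert l) :=
  SimpleGraph.fromRel (fun a b =>
    match a, b with
    | Sum.inl false, Sum.inl true => 1 ∈ l
    | Sum.inl false, Sum.inr ⟨_, j⟩ => j.val = 0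
    | Sum.inl true, Sum.inr ⟨i, j⟩ => j.val = l.get i - 2
    | Sum.inr ⟨i, j⟩, Sum.inr ⟨i', j'⟩ => i.val = i'.val ∧ j'.val = j.val + 1
    | _, _ => False)

/-- `v` (outside `c`) touches `w ∈ c`: some `v,w`-path meets `c` only at `w`. -/
def Touches {V : Type*} (G : SimpleGraph V) {u : V} (c : G.Walk u u) (v w : V) : Prop :=
  w ∈ c.support ∧ ∃ p : G.Walk v w, p.IsPath ∧ ∀ x ∈ p.support, x ∈ c.support → x = w

private lemma end_mem_support_tail' {V : Type*} {G : SimpleGraph V} {a b : V}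
    (p : G.Walk a b) (hp : p.length ≠ 0) : b ∈ p.support.tail := by
  cases p with
  | nil => simp at hp
  | cons h q => simpa using q.end_mem_support

private lemma mem_support_tail_of_closed {V : Type*} {G : SimpleGraph V} {a : V}
    (c : G.Walk a a) (hc : c.length ≠ 0) {x : V} (hx : x ∈ c.support) :
    x ∈ c.support.tail := by
  cases c with
  | nil => simp at hc
  | cons h q =>
    simp only [SimpleGraph.Walk.support_cons, List.tail_cons]
    rcases List.mem_cons.mp (by simpa using hx) with rfl | hx'
    · exact q.end_mem_support
    · exact hx'

/-- for `v` outside a longest odd cycle `c` (length ≥ 5) of a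
2-connected `G ∈ G*`, the touching set `T(v)` is a clique. -/
theorem stmt8 {V : Type*} (G : SimpleGraph V) (hG : InGStar G) (h2 : TwoConn G)
    (u : V) (c : G.Walk u u) (hc : c.IsCycle) (hodd : Odd c.length)
    (hlongest : ∀ (w : V) (c' : G.Walk w w), c'.IsCycle → Odd c'.length →
      c'.length ≤ c.length)
    (hlen : 5 ≤ c.length) (v : V) (hv : v ∉ c.support) :
    ∀ w z : V, Touches G c v w → Touches G c v z → w ≠ z → G.Adj w z := by
  classical
  intro w z htw htz hwz
  by_contra hna
  obtain ⟨hwc, pw, hpw, hpwint⟩ := htw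
  obtain ⟨hzc, pz, hpz, hpzint⟩ := htz
  -- the path `Q` from `w` to `z` internally disjoint from `c`
  set Q : G.Walk w z := (pw.reverse.append pz).bypass with hQdef
  have hQpath : Q.IsPath := Walk.bypass_isPath _
  have hQsup : ∀ x ∈ Q.support, x ∈ c.support → x = w ∨ x = z := by
    intro x hx hxc
    have hx' := Walk.support_bypass_subset _ hx
    rw [Walk.mem_support_append_iff] at hx'
    rcases hx' with h | h
    · exact Or.inl (hpwint x (by simpa [Walk.support_reverse] using h) hxc)
    · exact Or.inr (hpzint x h hxc)
  have hQedge : ∀ a b : V, s(a, b) ∈ Q.edges → s(a, b) ∉ c.edges := by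
    intro a b heQ hec
    have haQ := Q.fst_mem_support_of_mem_edges heQ
    have hbQ := Q.snd_mem_support_of_mem_edges heQ
    have hac := c.fst_mem_support_of_mem_edges hec
    have hbc := c.snd_mem_support_of_mem_edges hec
    have hadj := Q.adj_of_mem_edges heQ
    rcases hQsup a haQ hac with rfl | rfl <;> rcases hQsup b hbQ hbc with rfl | rfl
    · exact hadj.ne rfl
    · exact hna hadj
    · exact hna hadj.symm
    · exact hadj.ne rfl
  have hQc : ∀ e ∈ Q.edges, e ∉ c.edges := fun e =>
    Sym2.ind (f := fun e => e ∈ Q.edges → e ∉ c.edges) hQedge e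
  -- rotate `c` to start at `w`, and split it at `z` into two arcs
  set c' : G.Walk w w := c.rotate w hwc with hc'def
  have hc'cyc : c'.IsCycle := hc.rotate hwc
  have hzc' : z ∈ c'.support := by
    have h1 : z ∈ c.support.tail := mem_support_tail_of_closed c (by omega) hzc
    exact List.mem_of_mem_tail (((c.support_rotate w hwc).perm.mem_iff).mpr h1)
  have hc'sub : ∀ x ∈ c'.support, x ∈ c.support := by
    intro x hx
    rw [Walk.support_eq_cons c'] at hx
    rcases List.mem_cons.mp hx with rfl | hx'
    · exact hwc
    · exact List.mem_of_mem_tail (((c.support_rotate w hwc).perm.mem_iff).mp hx')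
  have hc'edge : ∀ e ∈ c'.edges, e ∈ c.edges := fun e he =>
    ((c.rotate_edges w hwc).perm.mem_iff).mp he
  set A : G.Walk w z := c'.takeUntil z hzc' with hAdef
  set B : G.Walk z w := c'.dropUntil z hzc' with hBdef
  have hspec : A.append B = c' := c'.take_spec hzc'
  have hlenAB : A.length + B.length = c.length := by
    have h1 : A.length + B.length = c'.length := by
      rw [← Walk.length_append, hspec]
    have h2 : c'.length = c.length := by
      have h3 := (c.rotate_edges w hwc).perm.length_eq
      rwa [Walk.length_edges, Walk.length_edges] at h3
    omega
  have hAne : A.length ≠ 0 := fun h => hwz (Walk.eq_of_length_eq_zero h)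
  have hBne : B.length ≠ 0 := fun h => hwz (Walk.eq_of_length_eq_zero h).symm
  have htailsplit : c'.support.tail = A.support.tail ++ B.support.tail := by
    conv_lhs => rw [← hspec]
    rw [Walk.support_append, Walk.support_eq_cons A]
    rfl
  have hnodup := hc'cyc.support_nodup
  rw [htailsplit, List.nodup_append] at hnodup
  obtain ⟨hAnd, hBnd, hABdisj⟩ := hnodup
  have hwB : w ∈ B.support.tail := end_mem_support_tail' B hBne
  have hzA : z ∈ A.support.tail := end_mem_support_tail' A hAne
  have hApath : A.IsPath := by
    rw [Walk.isPath_def, Walk.support_eq_cons]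
    exact List.nodup_cons.mpr ⟨fun h => hABdisj w h w hwB rfl, hAnd⟩
  have hBpath : B.IsPath := by
    rw [Walk.isPath_def, Walk.support_eq_cons]
    exact List.nodup_cons.mpr ⟨fun h => hABdisj z hzA z h rfl, hBnd⟩
  have hAsub : ∀ x ∈ A.support, x ∈ c.support := fun x hx =>
    hc'sub x (c'.support_takeUntil_subset hzc' hx)
  have hBsub : ∀ x ∈ B.support, x ∈ c.support := fun x hx =>
    hc'sub x (c'.support_dropUntil_subset hzc' hx)
  have hAedge : ∀ e ∈ A.edges, e ∈ c.edges := fun e he =>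
    hc'edge e (c'.edges_takeUntil_subset hzc' he)
  have hBedge : ∀ e ∈ B.edges, e ∈ c.edges := fun e he =>
    hc'edge e (c'.edges_dropUntil_subset hzc' he)
  -- the key step: a `z,w`-path along `c` with parity making an odd cycle with `Q`
  -- must have length 1, contradicting non-adjacency
  have key : ∀ R : G.Walk z w, R.IsPath → (∀ x ∈ R.support, x ∈ c.support) →
      (∀ e ∈ R.edges, e ∈ c.edges) → Odd (Q.length + R.length) → False := by
    intro R hR hRsup hRedge hpar
    have hRne : R.length ≠ 0 := fun h => hwz (Walk.eq_of_length_eq_zero h).symm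
    have hQne : Q.length ≠ 0 := fun h => hwz (Walk.eq_of_length_eq_zero h)
    set cn : G.Walk w w := Q.append R with hcn
    have hcnlen : cn.length = Q.length + R.length := Walk.length_append _ _
    have htrail : cn.IsTrail := by
      rw [Walk.isTrail_def, hcn, Walk.edges_append, List.nodup_append]
      exact ⟨hQpath.isTrail.edges_nodup, hR.isTrail.edges_nodup,
        fun e heQ e' heR hee => hQc e heQ (by subst hee; exact hRedge e heR)⟩
    have hne_nil : cn ≠ Walk.nil := by
      intro h
      have h0 : cn.length = 0 := by rw [h]; rfl
      omega
    have htail : cn.support.tail = Q.support.tail ++ R.support.tail := by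
      rw [hcn, Walk.support_append, Walk.support_eq_cons Q]
      rfl
    have hwQ : w ∉ Q.support.tail := by
      have h1 := hQpath.support_nodup
      rw [Walk.support_eq_cons] at h1
      exact (List.nodup_cons.mp h1).1
    have hzR : z ∉ R.support.tail := by
      have h1 := hR.support_nodup
      rw [Walk.support_eq_cons] at h1
      exact (List.nodup_cons.mp h1).1
    have hnod : cn.support.tail.Nodup := by
      rw [htail, List.nodup_append]
      refine ⟨hQpath.support_nodup.tail, hR.support_nodup.tail, ?_⟩
      intro x hxQ x' hxR hxx
      subst hxx
      have hxQs : x ∈ Q.support := List.mem_of_mem_tail hxQ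
      have hxRs : x ∈ R.support := List.mem_of_mem_tail hxR
      rcases hQsup x hxQs (hRsup x hxRs) with rfl | rfl
      · exact hwQ hxQ
      · exact hzR hxR
    have hcyc : cn.IsCycle := ⟨⟨htrail, hne_nil⟩, hnod⟩
    have hoddn : Odd cn.length := by rw [hcnlen]; exact hpar
    obtain ⟨e, heQ⟩ : ∃ e, e ∈ Q.edges := by
      refine List.exists_mem_of_ne_nil _ fun h => ?_
      have h1 := Walk.length_edges Q
      rw [h] at h1
      simp only [List.length_nil] at h1
      omega
    have hecn : e ∈ cn.edges := by
      rw [hcn, Walk.edges_append, List.mem_append]; exact Or.inl heQ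
    have hnset : {e | e ∈ cn.edges} ≠ {e | e ∈ c.edges} := by
      intro h
      have he1 : e ∈ {e | e ∈ cn.edges} := hecn
      rw [h] at he1
      exact hQc e heQ he1
    have hle := hG w u cn c hcyc hc hoddn hodd hnset
    have hsubset : {e | e ∈ R.edges} ⊆ {e | e ∈ cn.edges} ∩ {e | e ∈ c.edges} := by
      intro e' he'
      refine ⟨?_, hRedge e' he'⟩
      rw [Set.mem_setOf_eq, hcn, Walk.edges_append, List.mem_append]
      exact Or.inr he'
    have hfin : ({e | e ∈ cn.edges} ∩ {e | e ∈ c.edges}).Finite :=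
      (c.edges.finite_toSet).subset Set.inter_subset_right
    have hcard : {e | e ∈ R.edges}.ncard = R.length := by
      have h1 : {e : Sym2 V | e ∈ R.edges} = ↑R.edges.toFinset := by ext e'; simp
      rw [h1, Set.ncard_coe_finset, List.toFinset_card_of_nodup hR.isTrail.edges_nodup,
        Walk.length_edges]
    have hmono := Set.ncard_le_ncard hsubset hfin
    rw [hcard] at hmono
    have hR1 : R.length = 1 := by omega
    exact hna (Walk.adj_of_length_eq_one hR1).symm
  rcases Nat.even_or_odd (Q.length + A.length) with hpar | hpar
  · -- `Q.length + A.length` even, so `Q.length + B.length` is odd: use arc `B`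
    refine key B hBpath hBsub hBedge ?_
    rw [Nat.odd_iff] at hodd ⊢
    rw [Nat.even_iff] at hpar
    omega
  · -- use arc `A` reversed
    refine key A.reverse hApath.reverse ?_ ?_ ?_
    · intro x hx
      exact hAsub x (by rwa [Walk.support_reverse, List.mem_reverse] at hx)
    · intro e he
      exact hAedge e (by rwa [Walk.edges_reverse, List.mem_reverse] at he)
    · rwa [Walk.length_reverse]
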